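/- arXiv:2305.04012 — 2 statements merged into one kernel-verified Lean document; each statement's English description precedes it below -/
import Mathlib

section
/- In the dcpo L, if D is a directed subset whose supremum lies in Σ*, then D ∩ Σ* is directed, cofinal in D, and ⋁(D ∩ Σ*) = ⋁D. -/
/-- Nonempty finite sequences of positive naturals. -/
abbrev FinSeq := {l : List ℕ+ // l ≠ []}

/-- `Sig` : nonempty finite or countably infinite sequences of positive naturals. -/
abbrev Sig := FinSeq ⊕ (ℕ → ℕ+)

/-- The substring (prefix) order on `Sig`. -/
def sigLE : Sig → Sig → Prop
  | Sum.inl a, Sum.inl b => a.val <+: b.val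
  | Sum.inl a, Sum.inr f => ∀ i : Fin a.val.length, a.val.get i = f i.val
  | Sum.inr f, Sum.inr g => f = g
  | Sum.inr _, Sum.inl _ => False

/-- A subset `D` is directed w.r.t. relation `r`. -/
def DirectedSet {A : Type _} (r : A → A → Prop) (D : Set A) : Prop :=
  D.Nonempty ∧ ∀ a ∈ D, ∀ b ∈ D, ∃ c ∈ D, r a c ∧ r b c

/-- `s` is the supremum (least upper bound) of `D` w.r.t. `r`. -/
def IsSupOf {A : Type _} (r : A → A → Prop) (D : Set A) (s : A) : Prop :=
  (∀ a ∈ D, r a s) ∧ ∀ u, (∀ a ∈ D, r a u) → r s u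

/-- `c` is a compact element w.r.t. `r`. -/
def IsCompactEl {A : Type _} (r : A → A → Prop) (c : A) : Prop :=
  ∀ D s, DirectedSet r D → IsSupOf r D s → r c s → ∃ d ∈ D, r c d

/-- `x` is maximal w.r.t. `r`. -/
def IsMaximalEl {A : Type _} (r : A → A → Prop) (x : A) : Prop :=
  ∀ y, r x y → y = x

/-- `U` is Scott open w.r.t. `r`. -/
def ScottOpen {A : Type _} (r : A → A → Prop) (U : Set A) : Prop :=
  (∀ x ∈ U, ∀ y, r x y → y ∈ U) ∧
  ∀ D s, DirectedSet r D → IsSupOf r D s → s ∈ U → ∃ d ∈ D, d ∈ U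

/-- The poset `X`: pairs `x_{m,n}` with `m ∈ ℕ₊`, `n ∈ ℕ₊ ∪ {ω}` (`ω = ⊤`). -/
abbrev XP := ℕ+ × WithTop ℕ+

/-- Order on `X`: `x_{m₁,n₁} ≤ x_{m₂,n₂}` iff `m₁ = m₂` and `n₁ ≤ n₂`. -/
def xLE : XP → XP → Prop := fun a b => a.1 = b.1 ∧ a.2 ≤ b.2

/-- The carrier of `L = X ∪ Σ ∪ Σ*`. -/
abbrev LP := XP ⊕ (Sig ⊕ Sig)

def toX (p : XP) : LP := Sum.inl p
/-- The copy `Σ` inside `L`. -/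
def toS (a : Sig) : LP := Sum.inr (Sum.inl a)
/-- The copy `Σ*` inside `L`. -/
def toS' (a : Sig) : LP := Sum.inr (Sum.inr a)

/-- Underlying sequence of an element of `Σ ∪ Σ*`. -/
def sigOf : Sig ⊕ Sig → Sig := Sum.elim id id

/-- `entryGE v k m` : the length of `v` is `≥ k+1` and its `(k+1)`-th entry is `≥ m`
(0-based index `k`). -/
def entryGE : Sig → ℕ → ℕ+ → Prop
  | Sum.inl l, k, m => ∃ h : k < l.val.length, m ≤ l.val.get ⟨k, h⟩
  | Sum.inr f, k, m => m ≤ f k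

/-- The order on `L`. -/
def lLE : LP → LP → Prop
  | Sum.inl x, Sum.inl y => xLE x y
  | Sum.inl x, Sum.inr w =>
      ∃ m : ℕ+, x.2 = (m : WithTop ℕ+) ∧ entryGE (sigOf w) x.1.natPred m
  | Sum.inr (Sum.inl a), Sum.inr w => sigLE a (sigOf w)
  | Sum.inr (Sum.inr a), Sum.inr (Sum.inr b) => sigLE a b
  | Sum.inr (Sum.inr _), Sum.inr (Sum.inl _) => False
  | Sum.inr _, Sum.inl _ => False


lemma sigLE_trans {a b c : Sig} (h1 : sigLE a b) (h2 : sigLE b c) : sigLE a c := by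
  cases a with
  | inl a =>
    cases b with
    | inl b =>
      cases c with
      | inl c => exact h1.trans h2
      | inr f =>
        intro i
        have hlen : a.val.length ≤ b.val.length := h1.length_le
        have := h2 ⟨i.val, lt_of_lt_of_le i.isLt hlen⟩
        simp only [List.get_eq_getElem] at this ⊢
        rw [← this, h1.getElem i.isLt]
    | inr f =>
      cases c with
      | inl c => exact absurd h2 (by simp [sigLE])
      | inr g => cases h2; exact h1
  | inr f =>
    cases b with
    | inl b => exact absurd h1 (by simp [sigLE])
    | inr g =>
      cases h1
      exact h2

lemma entryGE_mono {b g : Sig} {k : ℕ} {m : ℕ+} (h1 : entryGE b k m) (h2 : sigLE b g) :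
    entryGE g k m := by
  cases b with
  | inl l =>
    obtain ⟨hk, hm⟩ := h1
    cases g with
    | inl l' =>
      have hk' : k < l'.val.length := lt_of_lt_of_le hk h2.length_le
      refine ⟨hk', ?_⟩
      simp only [List.get_eq_getElem] at hm ⊢
      rw [← List.IsPrefix.getElem h2 hk]
      exact hm
    | inr f =>
      have := h2 ⟨k, hk⟩
      simp only [List.get_eq_getElem] at this hm
      show m ≤ f k
      exact this ▸ hm
  | inr f =>
    cases g with
    | inl l' => exact absurd h2 (by simp [sigLE])
    | inr g' => cases h2; exact h1

/-- If `toS' c ≤ e` then `e ∈ Σ*`. -/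
lemma le_of_sstar {c : Sig} {e : LP} (h : lLE (toS' c) e) : ∃ b : Sig, e = toS' b := by
  rcases e with x | (a | b)
  · exact absurd h (by simp [lLE, toS'])
  · exact absurd h (by simp [lLE, toS'])
  · exact ⟨b, rfl⟩

/-- Transitivity through an element of `Σ*`. -/
lemma lLE_trans_sstar {d : LP} {b g : Sig} (h1 : lLE d (toS' b)) (h2 : sigLE b g) :
    lLE d (toS' g) := by
  rcases d with x | (c | c)
  · obtain ⟨m, hm, hge⟩ := h1
    exact ⟨m, hm, entryGE_mono hge h2⟩
  · exact sigLE_trans h1 h2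
  · exact sigLE_trans h1 h2

theorem stmt14 (D : Set LP) (s : LP) (hD : DirectedSet lLE D)
    (hs : IsSupOf lLE D s) (hmem : ∃ a : Sig, s = toS' a) :
    DirectedSet lLE (D ∩ {u | ∃ a : Sig, u = toS' a}) ∧
    (∀ d ∈ D, ∃ e ∈ D ∩ {u | ∃ a : Sig, u = toS' a}, lLE d e) ∧
    IsSupOf lLE (D ∩ {u | ∃ a : Sig, u = toS' a}) s := by
  classical
  obtain ⟨a, rfl⟩ := hmem
  -- There is an element of D in Σ*
  have hex : ∃ d ∈ D, ∃ c : Sig, d = toS' c := by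
    by_contra hcon
    push_neg at hcon
    have hub : ∀ d ∈ D, lLE d (toS a) := by
      intro d hd
      have hda := hs.1 d hd
      rcases d with x | (c | c)
      · exact hda
      · exact hda
      · exact absurd rfl (hcon _ hd c)
    exact (by simp [lLE, toS, toS'] : ¬ lLE (toS' a) (toS a)) (hs.2 _ hub)
  obtain ⟨d₀, hd₀D, c₀, rfl⟩ := hex
  have hmemD : toS' c₀ ∈ D ∩ {u | ∃ a : Sig, u = toS' a} := ⟨hd₀D, c₀, rfl⟩
  -- cofinality
  have hcof : ∀ d ∈ D, ∃ e ∈ D ∩ {u | ∃ a : Sig, u = toS' a}, lLE d e := by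
    intro d hd
    obtain ⟨e, heD, hde, h0e⟩ := hD.2 d hd (toS' c₀) hd₀D
    obtain ⟨b, rfl⟩ := le_of_sstar h0e
    exact ⟨toS' b, ⟨heD, b, rfl⟩, hde⟩
  refine ⟨⟨⟨_, hmemD⟩, ?_⟩, hcof, ?_, ?_⟩
  · rintro x ⟨hxD, cx, rfl⟩ y ⟨hyD, cy, rfl⟩
    obtain ⟨e, heD, hxe, hye⟩ := hD.2 _ hxD _ hyD
    obtain ⟨b, rfl⟩ := le_of_sstar hxe
    exact ⟨toS' b, ⟨heD, b, rfl⟩, hxe, hye⟩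
  · exact fun d hd => hs.1 d hd.1
  · intro u hu
    refine hs.2 u ?_
    intro d hd
    obtain ⟨e, ⟨heD, b, rfl⟩, hde⟩ := hcof d hd
    have hbu := hu _ ⟨heD, b, rfl⟩
    obtain ⟨g, rfl⟩ := le_of_sstar hbu
    exact lLE_trans_sstar hde hbu
end

section
/- In the dcpo L, every finite sequence a ∈ Σ, every copy a* ∈ Σ* of a finite sequence, and every x_{k,m} with k, m ∈ ℕ₊ is a compact element; moreover K(L) = L \ (max Σ ∪ max Σ* ∪ max X), and this set is countable. -/
-- ### auxiliary lemmas

lemma prefix_of_agree {l₁ l₂ : List ℕ+} (hlen : l₁.length ≤ l₂.length)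
    (h : ∀ i (h₁ : i < l₁.length) (h₂ : i < l₂.length), l₁[i] = l₂[i]) : l₁ <+: l₂ := by
  rw [List.prefix_iff_eq_take]
  refine List.ext_getElem (by simp [Nat.min_eq_left hlen]) ?_
  intro n h1 h2
  simp only [List.getElem_take]
  exact h n h1 (lt_of_lt_of_le h1 hlen)

lemma sigLE_refl (a : Sig) : sigLE a a := by
  cases a with
  | inl l => exact List.prefix_refl _
  | inr f => rfl

lemma entryGE_mono_s16 {a : Sig} {k : ℕ} {m m' : ℕ+} (hm : m' ≤ m) (h : entryGE a k m) :
    entryGE a k m' := by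
  cases a with
  | inl l => obtain ⟨hk, hge⟩ := h; exact ⟨hk, hm.trans hge⟩
  | inr f => exact hm.trans h

lemma entryGE_sigLE {a b : Sig} {k : ℕ} {m : ℕ+} (hab : sigLE a b) (h : entryGE a k m) :
    entryGE b k m := by
  cases a with
  | inl la =>
    obtain ⟨hk, hge⟩ := h
    cases b with
    | inl lb =>
      refine ⟨lt_of_lt_of_le hk hab.length_le, ?_⟩
      have := hab.getElem hk
      simp only [List.get_eq_getElem] at *
      rw [← this]; exact hge
    | inr f =>
      have := hab ⟨k, hk⟩
      simp only [List.get_eq_getElem] at this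
      show m ≤ f k
      rw [← this]; exact hge
  | inr f =>
    cases b with
    | inl lb => exact absurd hab (by simp [sigLE])
    | inr g => subst hab; exact h

lemma lLE_refl (x : LP) : lLE x x := by
  cases x with
  | inl p => exact ⟨rfl, le_refl _⟩
  | inr w =>
    cases w with
    | inl a => exact sigLE_refl a
    | inr a => exact sigLE_refl a

-- lLE between two Σ∪Σ* elements implies sigLE of underlying sequences
lemma sigLE_of_lLE {w z : Sig ⊕ Sig} (h : lLE (Sum.inr w) (Sum.inr z)) :
    sigLE (sigOf w) (sigOf z) := by
  cases w with
  | inl a => exact h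
  | inr a =>
    cases z with
    | inl b => exact absurd h (by simp [lLE])
    | inr b => exact h

lemma lLE_trans {x y z : LP} (h1 : lLE x y) (h2 : lLE y z) : lLE x z := by
  cases x with
  | inl p =>
    cases y with
    | inl q =>
      cases z with
      | inl r => exact ⟨h1.1.trans h2.1, h1.2.trans h2.2⟩
      | inr w =>
        obtain ⟨m, hm, he⟩ := h2
        obtain ⟨hpq, hle⟩ := h1
        rw [hm] at hle
        lift p.2 to ℕ+ using (by
          intro hT; rw [hT] at hle; exact absurd hle (by simp)) with m' hm'
        refine ⟨m', hm'.symm ▸ rfl, ?_⟩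
        · rw [hpq]
          exact entryGE_mono_s16 (by exact_mod_cast hle) he
    | inr w =>
      cases z with
      | inl r => exact absurd h2 (by cases w <;> simp [lLE])
      | inr v =>
        obtain ⟨m, hm, he⟩ := h1
        exact ⟨m, hm, entryGE_sigLE (sigLE_of_lLE h2) he⟩
  | inr w =>
    cases y with
    | inl q => exact absurd h1 (by cases w <;> simp [lLE])
    | inr v =>
      cases z with
      | inl r => exact absurd h2 (by cases v <;> simp [lLE])
      | inr u =>
        cases w with
        | inl a => exact sigLE_trans h1 (sigLE_of_lLE h2)
        | inr a =>
          cases v with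
          | inl b => exact absurd h1 (by simp [lLE])
          | inr b =>
            cases u with
            | inl c => exact absurd h2 (by simp [lLE])
            | inr c => exact sigLE_trans h1 h2

-- auxiliary "what is above" lemmas
lemma above_inr {w : Sig ⊕ Sig} {z : LP} (h : lLE (Sum.inr w) z) : ∃ v, z = Sum.inr v := by
  cases z with
  | inl p => cases w with
    | inl a => exact h.elim
    | inr a => exact h.elim
  | inr v => exact ⟨v, rfl⟩

lemma above_S' {a : Sig} {z : LP} (h : lLE (Sum.inr (Sum.inr a)) z) :
    ∃ b, z = Sum.inr (Sum.inr b) ∧ sigLE a b := by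
  cases z with
  | inl p => exact h.elim
  | inr v => cases v with
    | inl b => exact h.elim
    | inr b => exact ⟨b, rfl, h⟩

def FinLike (c : LP) : Prop :=
  (∃ l : FinSeq, c = toS (Sum.inl l)) ∨ (∃ l : FinSeq, c = toS' (Sum.inl l)) ∨
  ∃ (k m : ℕ+), c = toX (k, (m : WithTop ℕ+))

lemma main_compact (c : LP) (hc : FinLike c) : IsCompactEl lLE c := by
  classical
  intro D s hD hs hcs
  by_cases hib : ∃ d ∈ D, ∀ e ∈ D, lLE e d
  · obtain ⟨d, hd, hub⟩ := hib
    exact ⟨d, hd, lLE_trans hcs (hs.2 d hub)⟩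
  by_cases hW : ∃ w : Sig ⊕ Sig, Sum.inr w ∈ D
  · -- D contains elements of Σ ∪ Σ*
    -- no infinite sequence of Σ* lies in D
    have hnoinfS' : ∀ f : ℕ → ℕ+, Sum.inr (Sum.inr (Sum.inr f)) ∉ D := by
      intro f hf
      refine hib ⟨_, hf, ?_⟩
      intro e he
      obtain ⟨b, hb, h1, h2⟩ := hD.2 _ he _ hf
      obtain ⟨v, rfl, hsig⟩ := above_S' h2
      cases v with
      | inl l => exact hsig.elim
      | inr gg => have : f = gg := hsig; subst this; exact h1
    have hnoinfS : ∀ f : ℕ → ℕ+, Sum.inr (Sum.inl (Sum.inr f)) ∉ D := by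
      intro f hf
      refine hib ⟨_, hf, ?_⟩
      intro e he
      obtain ⟨b, hb, h1, h2⟩ := hD.2 _ he _ hf
      cases b with
      | inl p => exact h2.elim
      | inr w =>
        have hsig : sigLE (Sum.inr f) (sigOf w) := by
          cases w with
          | inl v => exact h2
          | inr v => exact h2
        cases w with
        | inl v => cases v with
          | inl l => exact hsig.elim
          | inr gg => have : f = gg := hsig; subst this; exact h1
        | inr v => cases v with
          | inl l => exact hsig.elim
          | inr gg =>
            have : f = gg := hsig
            subst this
            exact absurd hb (hnoinfS' f)
    have hfin : ∀ w : Sig ⊕ Sig, Sum.inr w ∈ D → ∃ l : FinSeq, sigOf w = Sum.inl l := by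
      intro w hw
      cases w with
      | inl v => cases v with
        | inl l => exact ⟨l, rfl⟩
        | inr f => exact absurd hw (hnoinfS f)
      | inr v => cases v with
        | inl l => exact ⟨l, rfl⟩
        | inr f => exact absurd hw (hnoinfS' f)
    have hchain : ∀ w₁ w₂, Sum.inr w₁ ∈ D → Sum.inr w₂ ∈ D →
        ∀ l₁ l₂ : FinSeq, sigOf w₁ = Sum.inl l₁ → sigOf w₂ = Sum.inl l₂ →
        l₁.val <+: l₂.val ∨ l₂.val <+: l₁.val := by
      intro w₁ w₂ h₁ h₂ l₁ l₂ e₁ e₂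
      obtain ⟨b, hb, hb1, hb2⟩ := hD.2 _ h₁ _ h₂
      obtain ⟨v, rfl⟩ := above_inr hb1
      obtain ⟨lb, hlb⟩ := hfin v hb
      have s1 : sigLE (sigOf w₁) (sigOf v) := sigLE_of_lLE hb1
      have s2 : sigLE (sigOf w₂) (sigOf v) := sigLE_of_lLE hb2
      rw [e₁, hlb] at s1
      rw [e₂, hlb] at s2
      exact List.prefix_or_prefix_of_prefix s1 s2
    by_cases hlen : ∀ n : ℕ, ∃ w : Sig ⊕ Sig,
        Sum.inr w ∈ D ∧ ∃ l : FinSeq, sigOf w = Sum.inl l ∧ n < l.val.length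
    · -- unbounded lengths
      choose pick hpickD pickl hpickl hpicklen using hlen
      set g : ℕ → ℕ+ := fun n => (pickl n).val[n]'(hpicklen n) with hg
      have hcoh : ∀ (l : FinSeq) (w : Sig ⊕ Sig), Sum.inr w ∈ D → sigOf w = Sum.inl l →
          ∀ i (hi : i < l.val.length), l.val[i] = g i := by
        intro l w hw he i hi
        rcases hchain w (pick i) hw (hpickD i) l (pickl i) he (hpickl i) with h | h
        · exact h.getElem hi
        · exact (h.getElem (hpicklen i)).symm
      have hagree : ∀ (l : FinSeq) (w : Sig ⊕ Sig), Sum.inr w ∈ D → sigOf w = Sum.inl l →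
          sigLE (Sum.inl l) (Sum.inr g) := by
        intro l w hw he i
        simp only [List.get_eq_getElem]
        exact hcoh l w hw he i.val i.isLt
      have hXup : ∀ x : XP, Sum.inl x ∈ D →
          ∃ m : ℕ+, x.2 = (m : WithTop ℕ+) ∧ entryGE (Sum.inr g) x.1.natPred m := by
        intro x hx
        obtain ⟨w0, hw0⟩ := hW
        obtain ⟨b, hb, hb1, hb2⟩ := hD.2 _ hx _ hw0
        obtain ⟨v, rfl⟩ := above_inr hb2
        obtain ⟨lv, hlv⟩ := hfin v hb
        obtain ⟨m, hm, hent⟩ := hb1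
        rw [hlv] at hent
        obtain ⟨hk, hge⟩ := hent
        refine ⟨m, hm, ?_⟩
        show m ≤ g x.1.natPred
        rw [← hcoh lv v hb hlv _ hk]
        exact hge
      -- extraction helpers
      have ext1 : ∀ l : FinSeq, sigLE (Sum.inl l) (Sum.inr g) →
          ∃ d ∈ D, lLE (toS (Sum.inl l)) d := by
        intro l hl
        refine ⟨Sum.inr (pick l.val.length), hpickD _, ?_⟩
        show sigLE (Sum.inl l) (sigOf (pick l.val.length))
        rw [hpickl]
        refine prefix_of_agree (le_of_lt (hpicklen _)) ?_
        intro i h1 h2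
        have := hl ⟨i, h1⟩
        simp only [List.get_eq_getElem] at this
        rw [this, hcoh _ _ (hpickD _) (hpickl _) i h2]
      have ext3 : ∀ (k m : ℕ+), entryGE (Sum.inr g) k.natPred m →
          ∃ d ∈ D, lLE (toX (k, (m : WithTop ℕ+))) d := by
        intro k m hent
        refine ⟨Sum.inr (pick k.natPred), hpickD _, ?_⟩
        refine ⟨m, rfl, ?_⟩
        rw [hpickl]
        refine ⟨hpicklen _, ?_⟩
        have := hcoh _ _ (hpickD k.natPred) (hpickl _) k.natPred (hpicklen _)
        simp only [List.get_eq_getElem]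
        rw [this]
        exact hent
      by_cases hS' : ∃ b : Sig, Sum.inr (Sum.inr b) ∈ D
      · -- Σ* nonempty : canonical upper bound in Σ*
        have hup : ∀ e ∈ D, lLE e (toS' (Sum.inr g)) := by
          intro e he
          cases e with
          | inl x => exact hXup x he
          | inr v => cases v with
            | inl σ =>
              obtain ⟨l, hl⟩ := hfin (Sum.inl σ) he
              have : σ = Sum.inl l := hl
              subst this
              exact hagree l _ he hl
            | inr σ =>
              obtain ⟨l, hl⟩ := hfin (Sum.inr σ) he
              have : σ = Sum.inl l := hl
              subst this
              exact hagree l _ he hl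
        have hcu : lLE c (toS' (Sum.inr g)) := lLE_trans hcs (hs.2 _ hup)
        rcases hc with ⟨l, rfl⟩ | ⟨l, rfl⟩ | ⟨k, m, rfl⟩
        · exact ext1 l hcu
        · -- c = toS' (inl l) : need a Σ* witness in D
          obtain ⟨b0, hb0⟩ := hS'
          obtain ⟨b, hb, hb1, hb2⟩ := hD.2 _ (hpickD l.val.length) _ hb0
          obtain ⟨v, rfl, hsv⟩ := above_S' hb2
          obtain ⟨lv, hlv⟩ := hfin (Sum.inr v) hb
          have hvv : v = Sum.inl lv := hlv
          subst hvv
          have hs1 : sigLE (sigOf (pick l.val.length)) (Sum.inl lv) := sigLE_of_lLE hb1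
          rw [hpickl] at hs1
          have hlenv : l.val.length ≤ lv.val.length :=
            le_trans (le_of_lt (hpicklen _)) hs1.length_le
          refine ⟨Sum.inr (Sum.inr (Sum.inl lv)), hb, ?_⟩
          show sigLE (Sum.inl l) (Sum.inl lv)
          refine prefix_of_agree hlenv ?_
          intro i h1 h2
          have := hcu ⟨i, h1⟩
          simp only [List.get_eq_getElem] at this
          rw [this, hcoh lv _ hb hlv i h2]
        · obtain ⟨m', hm', hent⟩ := hcu
          have : m = m' := WithTop.coe_inj.mp hm'
          subst this
          exact ext3 k m hent
      · -- no Σ* : canonical upper bound in Σ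
        have hup : ∀ e ∈ D, lLE e (toS (Sum.inr g)) := by
          intro e he
          cases e with
          | inl x => exact hXup x he
          | inr v => cases v with
            | inl σ =>
              obtain ⟨l, hl⟩ := hfin (Sum.inl σ) he
              have : σ = Sum.inl l := hl
              subst this
              exact hagree l _ he hl
            | inr σ => exact absurd ⟨σ, he⟩ hS'
        have hcu : lLE c (toS (Sum.inr g)) := lLE_trans hcs (hs.2 _ hup)
        rcases hc with ⟨l, rfl⟩ | ⟨l, rfl⟩ | ⟨k, m, rfl⟩
        · exact ext1 l hcu
        · exact hcu.elim
        · obtain ⟨m', hm', hent⟩ := hcu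
          have : m = m' := WithTop.coe_inj.mp hm'
          subst this
          exact ext3 k m hent
    · -- bounded lengths : there is an internal upper bound, contradiction
      exfalso
      push_neg at hlen
      obtain ⟨n, hn⟩ := hlen
      set P : ℕ → Prop := fun j => ∃ (w : Sig ⊕ Sig) (l : FinSeq),
        Sum.inr w ∈ D ∧ sigOf w = Sum.inl l ∧ l.val.length = j with hP
      obtain ⟨w0, hw0⟩ := hW
      obtain ⟨l0, hl0⟩ := hfin w0 hw0
      have hP0 : P l0.val.length := ⟨w0, l0, hw0, hl0, rfl⟩
      have hb0 : l0.val.length ≤ n := hn w0 hw0 l0 hl0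
      set M := Nat.findGreatest P n with hM
      have hPM : P M := Nat.findGreatest_spec hb0 hP0
      have hmax : ∀ (w : Sig ⊕ Sig) (l : FinSeq), Sum.inr w ∈ D → sigOf w = Sum.inl l →
          l.val.length ≤ M := by
        intro w l hw hl
        exact Nat.le_findGreatest (hn w hw l hl) ⟨w, l, hw, hl, rfl⟩
      obtain ⟨wM, lM, hwM, hlM, hlenM⟩ := hPM
      -- a prefix-chain element of maximal length is the top of all lists
      have hlist : ∀ (w : Sig ⊕ Sig) (l : FinSeq), Sum.inr w ∈ D → sigOf w = Sum.inl l →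
          lM.val <+: l.val → l = lM := by
        intro w l hw hl hpre
        refine Subtype.ext ((hpre.eq_of_length ?_).symm)
        exact le_antisymm (hlenM ▸ hpre.length_le) (hlenM ▸ hmax w l hw hl)
      by_cases hS' : ∃ b : Sig, Sum.inr (Sum.inr b) ∈ D
      · obtain ⟨b0, hb0'⟩ := hS'
        obtain ⟨b, hb, hb1, hb2⟩ := hD.2 _ hwM _ hb0'
        obtain ⟨v, rfl, hsv⟩ := above_S' hb2
        obtain ⟨lv, hlv⟩ := hfin (Sum.inr v) hb
        have hvv : v = Sum.inl lv := hlv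
        subst hvv
        have hs1 : sigLE (sigOf wM) (Sum.inl lv) := sigLE_of_lLE hb1
        rw [hlM] at hs1
        have : lv = lM := hlist _ lv hb hlv hs1
        subst this
        -- toS' (inl lv) ∈ D is an internal upper bound
        refine hib ⟨_, hb, ?_⟩
        intro e he
        obtain ⟨b2, hb2', h1, h2⟩ := hD.2 _ he _ hb
        obtain ⟨v2, rfl, hsv2⟩ := above_S' h2
        obtain ⟨lv2, hlv2⟩ := hfin (Sum.inr v2) hb2'
        have hvv2 : v2 = Sum.inl lv2 := hlv2
        subst hvv2
        have : lv2 = lv := hlist _ lv2 hb2' hlv2 hsv2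
        subst this
        exact h1
      · -- all of D ∩ (Σ ∪ Σ*) is in Σ
        have hSonly : ∀ v : Sig ⊕ Sig, Sum.inr v ∈ D → ∃ σ : Sig, v = Sum.inl σ := by
          intro v hv
          cases v with
          | inl σ => exact ⟨σ, rfl⟩
          | inr σ => exact absurd ⟨σ, hv⟩ hS'
        obtain ⟨σM, hσM⟩ := hSonly wM hwM
        subst hσM
        have hσM' : σM = Sum.inl lM := hlM
        subst hσM'
        refine hib ⟨_, hwM, ?_⟩
        intro e he
        obtain ⟨b2, hb2', h1, h2⟩ := hD.2 _ he _ hwM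
        obtain ⟨v2, rfl⟩ := above_inr h2
        obtain ⟨σ2, hσ2⟩ := hSonly v2 hb2'
        subst hσ2
        obtain ⟨lv2, hlv2⟩ := hfin (Sum.inl σ2) hb2'
        have : σ2 = Sum.inl lv2 := hlv2
        subst this
        have hs2 : sigLE (Sum.inl lM) (Sum.inl lv2) := h2
        have : lv2 = lM := hlist _ lv2 hb2' hlv2 hs2
        subst this
        exact h1
  · -- D ⊆ X
    have hXonly : ∀ d ∈ D, ∃ x : XP, d = Sum.inl x := by
      intro d hd
      cases d with
      | inl x => exact ⟨x, rfl⟩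
      | inr w => exact absurd ⟨w, hd⟩ hW
    obtain ⟨d0, hd0⟩ := hD.1
    obtain ⟨x0, hx0⟩ := hXonly d0 hd0
    subst hx0
    set k0 := x0.1 with hk0
    have hfst : ∀ x : XP, Sum.inl x ∈ D → x.1 = k0 := by
      intro x hx
      obtain ⟨b, hb, h1, h2⟩ := hD.2 _ hx _ hd0
      obtain ⟨y, rfl⟩ := hXonly b hb
      exact h1.1.trans h2.1.symm
    have hnotop : ∀ x : XP, Sum.inl x ∈ D → x.2 ≠ ⊤ := by
      intro x hx htop
      refine hib ⟨Sum.inl x, hx, ?_⟩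
      intro e he
      obtain ⟨b, hb, h1, h2⟩ := hD.2 _ he _ hx
      obtain ⟨y, rfl⟩ := hXonly b hb
      have hy2 : y.2 = ⊤ := top_le_iff.mp (htop ▸ h2.2)
      have : y = x := Prod.ext h2.1.symm (by rw [hy2, htop])
      rwa [this] at h1
    by_cases hunb : ∀ n : ℕ+, ∃ m' : ℕ+, n ≤ m' ∧ Sum.inl (k0, (m' : WithTop ℕ+)) ∈ D
    · -- unbounded : sup is (k0, ⊤)
      have hup : ∀ e ∈ D, lLE e (Sum.inl (k0, ⊤)) := by
        intro e he
        obtain ⟨y, rfl⟩ := hXonly e he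
        exact ⟨hfst y he, le_top⟩
      have hcu : lLE c (Sum.inl (k0, ⊤)) := lLE_trans hcs (hs.2 _ hup)
      rcases hc with ⟨l, rfl⟩ | ⟨l, rfl⟩ | ⟨k, m, rfl⟩
      · exact hcu.elim
      · exact hcu.elim
      · obtain ⟨m', hm', hmem⟩ := hunb m
        refine ⟨_, hmem, hcu.1, ?_⟩
        exact WithTop.coe_le_coe.mpr hm'
    · exfalso
      push_neg at hunb
      obtain ⟨n, hn⟩ := hunb
      set P : ℕ → Prop := fun j => ∃ mj : ℕ+, (mj : ℕ) = j ∧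
        Sum.inl (k0, (mj : WithTop ℕ+)) ∈ D with hP
      have hmem : ∀ x : XP, Sum.inl x ∈ D → ∃ mx : ℕ+, x.2 = ↑mx ∧ P mx := by
        intro x hx
        obtain ⟨mx, hmx⟩ : ∃ mx : ℕ+, x.2 = ↑mx :=
          ⟨x.2.untop (hnotop x hx), (WithTop.coe_untop _ _).symm⟩
        refine ⟨mx, hmx, mx, rfl, ?_⟩
        have : (k0, (mx : WithTop ℕ+)) = x := Prod.ext (hfst x hx).symm hmx.symm
        rw [this]
        exact hx
      have hbnd : ∀ j : ℕ, P j → j ≤ n := by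
        intro j hj
        obtain ⟨mj, hmj, hjD⟩ := hj
        by_contra hlt
        have hn' : n ≤ mj := by
          rw [← PNat.coe_le_coe, hmj]
          exact le_of_not_ge (fun hh => hlt hh)
        exact hn mj hn' hjD
      obtain ⟨m0, hm0, hPm0⟩ := hmem x0 hd0
      set M := Nat.findGreatest P n with hM
      have hPM : P M := Nat.findGreatest_spec (hbnd _ hPm0) hPm0
      obtain ⟨mM, hmM, hMD⟩ := hPM
      refine hib ⟨_, hMD, ?_⟩
      intro e he
      obtain ⟨y, rfl⟩ := hXonly e he
      obtain ⟨my, hmy, hPmy⟩ := hmem y he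
      have hle : (my : ℕ) ≤ M := Nat.le_findGreatest (hbnd _ hPmy) hPmy
      refine ⟨hfst y he, ?_⟩
      rw [hmy]
      refine WithTop.coe_le_coe.mpr ?_
      rw [← PNat.coe_le_coe, hmM]
      exact hle

-- prefix lists of a function
def pfx (f : ℕ → ℕ+) (n : ℕ) : FinSeq :=
  ⟨List.ofFn (fun i : Fin (n + 1) => f i), by simp⟩

lemma pfx_length (f : ℕ → ℕ+) (n : ℕ) : (pfx f n).val.length = n + 1 := by
  simp [pfx]

lemma pfx_get (f : ℕ → ℕ+) (n i : ℕ) (h : i < (pfx f n).val.length) :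
    (pfx f n).val[i] = f i := by
  simp only [pfx, List.getElem_ofFn]

lemma pfx_sigLE_inr (f : ℕ → ℕ+) (n : ℕ) : sigLE (Sum.inl (pfx f n)) (Sum.inr f) := by
  intro i
  simp only [List.get_eq_getElem]
  exact pfx_get f n i i.isLt

lemma pfx_prefix (f : ℕ → ℕ+) {n n' : ℕ} (h : n ≤ n') :
    (pfx f n).val <+: (pfx f n').val := by
  refine prefix_of_agree (by rw [pfx_length, pfx_length]; omega) ?_
  intro i h1 h2
  rw [pfx_get f n i h1, pfx_get f n' i h2]

-- if all prefixes of f sit below a sequence, that sequence is `Sum.inr f`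
lemma eq_inr_of_all_pfx (f : ℕ → ℕ+) (σ : Sig)
    (h : ∀ n : ℕ, sigLE (Sum.inl (pfx f n)) σ) : σ = Sum.inr f := by
  cases σ with
  | inl b =>
    exfalso
    have := (h b.val.length).length_le
    rw [pfx_length] at this
    omega
  | inr g =>
    congr 1
    funext i
    have := h i ⟨i, by rw [pfx_length]; omega⟩
    simp only [List.get_eq_getElem] at this
    rw [← this, pfx_get]

lemma pnat_not_succ_le (a : ℕ+) : ¬ (a + 1 ≤ a) := by
  intro h
  have : ((a : ℕ) + 1) ≤ (a : ℕ) := by exact_mod_cast h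
  omega

lemma not_compact_Xtop (m : ℕ+) : ¬ IsCompactEl lLE (toX (m, ⊤)) := by
  intro h
  set D : Set LP := {z | ∃ n : ℕ+, z = Sum.inl (m, (n : WithTop ℕ+))} with hDdef
  have hdir : DirectedSet lLE D := by
    refine ⟨⟨_, ⟨1, rfl⟩⟩, ?_⟩
    rintro _ ⟨n1, rfl⟩ _ ⟨n2, rfl⟩
    refine ⟨Sum.inl (m, ((max n1 n2 : ℕ+) : WithTop ℕ+)), ⟨_, rfl⟩, ⟨rfl, ?_⟩, ⟨rfl, ?_⟩⟩
    · exact WithTop.coe_le_coe.mpr (le_max_left _ _)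
    · exact WithTop.coe_le_coe.mpr (le_max_right _ _)
  have hsup : IsSupOf lLE D (toX (m, ⊤)) := by
    constructor
    · rintro _ ⟨n, rfl⟩; exact ⟨rfl, le_top⟩
    · intro u hu
      cases u with
      | inl y =>
        have h1 : lLE (Sum.inl (m, ((1:ℕ+) : WithTop ℕ+))) (Sum.inl y) := hu _ ⟨1, rfl⟩
        have hy2 : y.2 = ⊤ := by
          by_contra hne
          obtain ⟨p, hp⟩ : ∃ p : ℕ+, y.2 = ↑p :=
            ⟨y.2.untop hne, (WithTop.coe_untop _ _).symm⟩
          have h2 : lLE (Sum.inl (m, ((p+1 : ℕ+) : WithTop ℕ+))) (Sum.inl y) := hu _ ⟨p+1, rfl⟩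
          have h3 := h2.2
          rw [hp] at h3
          exact pnat_not_succ_le p (WithTop.coe_le_coe.mp h3)
        exact ⟨h1.1, by rw [hy2]⟩
      | inr w =>
        exfalso
        cases hsig : sigOf w with
        | inl l =>
          obtain ⟨m1, hm1, hent⟩ := hu _ ⟨1, rfl⟩
          rw [hsig] at hent
          obtain ⟨hk, -⟩ := hent
          obtain ⟨m2, hm2, hent2⟩ := hu _ ⟨l.val[m.natPred] + 1, rfl⟩
          rw [hsig] at hent2
          obtain ⟨hk2, hge2⟩ := hent2
          have : l.val[m.natPred] + 1 = m2 := WithTop.coe_inj.mp hm2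
          subst this
          simp only [List.get_eq_getElem] at hge2
          exact pnat_not_succ_le _ hge2
        | inr f =>
          obtain ⟨m2, hm2, hent2⟩ := hu _ ⟨f m.natPred + 1, rfl⟩
          rw [hsig] at hent2
          have : f m.natPred + 1 = m2 := WithTop.coe_inj.mp hm2
          subst this
          exact pnat_not_succ_le _ hent2
  obtain ⟨d, hd, hled⟩ := h D _ hdir hsup (lLE_refl _)
  obtain ⟨n, rfl⟩ := hd
  exact absurd hled.2 (by simp)

lemma not_compact_Sinf (f : ℕ → ℕ+) : ¬ IsCompactEl lLE (toS (Sum.inr f)) := by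
  intro h
  set D : Set LP := {z | ∃ n : ℕ, z = toS (Sum.inl (pfx f n))} with hDdef
  have hdir : DirectedSet lLE D := by
    refine ⟨⟨_, ⟨0, rfl⟩⟩, ?_⟩
    rintro _ ⟨n1, rfl⟩ _ ⟨n2, rfl⟩
    exact ⟨toS (Sum.inl (pfx f (max n1 n2))), ⟨_, rfl⟩,
      pfx_prefix f (le_max_left _ _), pfx_prefix f (le_max_right _ _)⟩
  have hsup : IsSupOf lLE D (toS (Sum.inr f)) := by
    constructor
    · rintro _ ⟨n, rfl⟩
      exact pfx_sigLE_inr f n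
    · intro u hu
      have h0 : lLE (toS (Sum.inl (pfx f 0))) u := hu _ ⟨0, rfl⟩
      obtain ⟨w, rfl⟩ := above_inr h0
      have hall : ∀ n, sigLE (Sum.inl (pfx f n)) (sigOf w) := fun n => hu _ ⟨n, rfl⟩
      have hw : sigOf w = Sum.inr f := eq_inr_of_all_pfx f _ hall
      show sigLE (Sum.inr f) (sigOf w)
      rw [hw]
      exact sigLE_refl _
  obtain ⟨d, hd, hled⟩ := h D _ hdir hsup (lLE_refl _)
  obtain ⟨n, rfl⟩ := hd
  exact hled.elim

lemma not_compact_S'inf (f : ℕ → ℕ+) : ¬ IsCompactEl lLE (toS' (Sum.inr f)) := by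
  intro h
  set D : Set LP := {z | ∃ n : ℕ, z = toS' (Sum.inl (pfx f n))} with hDdef
  have hdir : DirectedSet lLE D := by
    refine ⟨⟨_, ⟨0, rfl⟩⟩, ?_⟩
    rintro _ ⟨n1, rfl⟩ _ ⟨n2, rfl⟩
    exact ⟨toS' (Sum.inl (pfx f (max n1 n2))), ⟨_, rfl⟩,
      pfx_prefix f (le_max_left _ _), pfx_prefix f (le_max_right _ _)⟩
  have hsup : IsSupOf lLE D (toS' (Sum.inr f)) := by
    constructor
    · rintro _ ⟨n, rfl⟩
      exact pfx_sigLE_inr f n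
    · intro u hu
      have h0 : lLE (toS' (Sum.inl (pfx f 0))) u := hu _ ⟨0, rfl⟩
      obtain ⟨b, rfl, -⟩ := above_S' h0
      have hall : ∀ n, sigLE (Sum.inl (pfx f n)) b := fun n => hu _ ⟨n, rfl⟩
      have hb : b = Sum.inr f := eq_inr_of_all_pfx f _ hall
      show sigLE (Sum.inr f) b
      rw [hb]
      exact sigLE_refl _
  obtain ⟨d, hd, hled⟩ := h D _ hdir hsup (lLE_refl _)
  obtain ⟨n, rfl⟩ := hd
  exact hled.elim


theorem stmt16 :
    (∀ l : FinSeq, IsCompactEl lLE (toS (Sum.inl l))) ∧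
    (∀ l : FinSeq, IsCompactEl lLE (toS' (Sum.inl l))) ∧
    (∀ k m : ℕ+, IsCompactEl lLE (toX (k, (m : WithTop ℕ+)))) ∧
    (∀ u : LP, IsCompactEl lLE u ↔
      ¬ ((∃ f : ℕ → ℕ+, u = toS (Sum.inr f)) ∨
         (∃ f : ℕ → ℕ+, u = toS' (Sum.inr f)) ∨
         (∃ m : ℕ+, u = toX (m, ⊤)))) ∧
    {u : LP | IsCompactEl lLE u}.Countable := by
  have hchar : ∀ u : LP, IsCompactEl lLE u ↔
      ¬ ((∃ f : ℕ → ℕ+, u = toS (Sum.inr f)) ∨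
         (∃ f : ℕ → ℕ+, u = toS' (Sum.inr f)) ∨
         (∃ m : ℕ+, u = toX (m, ⊤))) := by
    intro u
    constructor
    · intro hcomp hbad
      rcases hbad with ⟨f, rfl⟩ | ⟨f, rfl⟩ | ⟨m, rfl⟩
      · exact not_compact_Sinf f hcomp
      · exact not_compact_S'inf f hcomp
      · exact not_compact_Xtop m hcomp
    · intro hgood
      push_neg at hgood
      obtain ⟨h1, h2, h3⟩ := hgood
      refine main_compact u ?_
      cases u with
      | inl p =>
        obtain ⟨k, t⟩ := p
        have ht : t ≠ ⊤ := by
          intro h; exact h3 k (by rw [h]; rfl)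
        obtain ⟨mt, hmt⟩ : ∃ mt : ℕ+, t = ↑mt :=
          ⟨t.untop ht, (WithTop.coe_untop _ _).symm⟩
        exact Or.inr (Or.inr ⟨k, mt, by rw [hmt]; rfl⟩)
      | inr w =>
        cases w with
        | inl σ =>
          cases σ with
          | inl l => exact Or.inl ⟨l, rfl⟩
          | inr f => exact absurd rfl (h1 f)
        | inr σ =>
          cases σ with
          | inl l => exact Or.inr (Or.inl ⟨l, rfl⟩)
          | inr f => exact absurd rfl (h2 f)
  refine ⟨fun l => main_compact _ (Or.inl ⟨l, rfl⟩),
    fun l => main_compact _ (Or.inr (Or.inl ⟨l, rfl⟩)),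
    fun k m => main_compact _ (Or.inr (Or.inr ⟨k, m, rfl⟩)),
    hchar, ?_⟩
  have hsub : {u : LP | IsCompactEl lLE u} ⊆
      Set.range (fun p : FinSeq ⊕ FinSeq ⊕ ℕ+ × ℕ+ =>
        Sum.elim (fun l => toS (Sum.inl l))
          (Sum.elim (fun l => toS' (Sum.inl l)) (fun q => toX (q.1, (q.2 : WithTop ℕ+)))) p) := by
    intro u hu
    have h := (hchar u).mp hu
    push_neg at h
    obtain ⟨h1, h2, h3⟩ := h
    cases u with
    | inl p =>
      obtain ⟨k, t⟩ := p
      have ht : t ≠ ⊤ := by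
        intro h; exact h3 k (by rw [h]; rfl)
      obtain ⟨mt, hmt⟩ : ∃ mt : ℕ+, t = ↑mt :=
        ⟨t.untop ht, (WithTop.coe_untop _ _).symm⟩
      exact ⟨Sum.inr (Sum.inr (k, mt)), by simp [toX, hmt]⟩
    | inr w =>
      cases w with
      | inl σ =>
        cases σ with
        | inl l => exact ⟨Sum.inl l, rfl⟩
        | inr f => exact absurd rfl (h1 f)
      | inr σ =>
        cases σ with
        | inl l => exact ⟨Sum.inr (Sum.inl l), rfl⟩
        | inr f => exact absurd rfl (h2 f)
  exact Set.Countable.mono hsub (Set.countable_range _)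
end
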